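/- Let ℓ ≥ 1, n ≥ ℓ+1, and let C be a family of (ℓ+1)-element subsets of [n] satisfying condition (C_{ℓ+1}) which is not equal to the family of all (ℓ+1)-element subsets of [n]. Then every ℓ-generic matroid on [n] whose family of circuits of cardinality ℓ+1 equals C has rank greater than ℓ, and there exists exactly one such ℓ-generic matroid of rank ℓ+1. -/

import Mathlib

noncomputable section

/-- `C` is a circuit of the matroid `M`: a minimal dependent subset of the ground set. -/
def IsCircuitF (M : Matroid ℕ) (C : Finset ℕ) : Prop :=
  ↑C ⊆ M.E ∧ ¬ M.Indep ↑C ∧ ∀ x ∈ C, M.Indep ↑(C.erase x)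

/-- `M` is `ℓ`-generic: it has no circuits of cardinality at most `ℓ`. -/
def GenericM (ℓ : ℕ) (M : Matroid ℕ) : Prop :=
  ∀ C : Finset ℕ, IsCircuitF M C → ℓ < C.card

/-- `M` has rank `r`: it has a base of cardinality `r`. -/
def HasRank (M : Matroid ℕ) (r : ℕ) : Prop :=
  ∃ B : Finset ℕ, M.IsBase ↑B ∧ B.card = r

/-- Condition `(C_{ℓ+1})` for a family `𝒞` of `(ℓ+1)`-element subsets:  whenever
`C₁, C₂ ∈ 𝒞` and `|C₁ ∪ C₂| = ℓ+2`, every `(ℓ+1)`-element subset of `C₁ ∪ C₂` is in `𝒞`. -/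
def CondC (ℓ : ℕ) (𝒞 : Set (Finset ℕ)) : Prop :=
  ∀ C₁ ∈ 𝒞, ∀ C₂ ∈ 𝒞, (C₁ ∪ C₂).card = ℓ + 2 →
    ∀ C₃ : Finset ℕ, C₃ ⊆ C₁ ∪ C₂ → C₃.card = ℓ + 1 → C₃ ∈ 𝒞

end

/-- Any dependent finset contains a (finset) circuit. -/
lemma exists_circuitF (M : Matroid ℕ) :
    ∀ S : Finset ℕ, ↑S ⊆ M.E → ¬ M.Indep ↑S → ∃ C, C ⊆ S ∧ IsCircuitF M C := by
  intro S
  induction S using Finset.strongInduction with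
  | _ S ih =>
    intro hSE hS
    by_cases h : ∀ x ∈ S, M.Indep ↑(S.erase x)
    · exact ⟨S, Finset.Subset.refl S, hSE, hS, h⟩
    · push_neg at h
      obtain ⟨x, hxS, hx⟩ := h
      obtain ⟨C, hCsub, hC⟩ := ih (S.erase x) (Finset.erase_ssubset hxS)
        ((Finset.coe_subset.mpr (Finset.erase_subset x S)).trans hSE) hx
      exact ⟨C, hCsub.trans (Finset.erase_subset x S), hC⟩

/-- Key exchange lemma derived from condition `(C_{ℓ+1})`. -/
lemma exchange_key (ℓ : ℕ) (𝒞 : Set (Finset ℕ)) (hcond : CondC ℓ 𝒞) :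
    ∀ k (I J : Finset ℕ), (I \ J).card = k → I.card = ℓ → J.card = ℓ + 1 → J ∉ 𝒞 →
    (∀ x ∈ J, x ∉ I → insert x I ∈ 𝒞) → False := by
  intro k
  induction k with
  | zero =>
    intro I J hk hI hJ hJC hall
    have hsub : I ⊆ J := by
      rw [← Finset.sdiff_eq_empty_iff_subset]; exact Finset.card_eq_zero.mp hk
    have h1 : (J \ I).card = 1 := by
      rw [Finset.card_sdiff_of_subset hsub, hJ, hI]; omega
    obtain ⟨x, hx⟩ := Finset.card_eq_one.mp h1
    have hxJ : x ∈ J \ I := by rw [hx]; exact Finset.mem_singleton_self x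
    rw [Finset.mem_sdiff] at hxJ
    have heq : insert x I = J := by
      apply Finset.eq_of_subset_of_card_le
      · intro y hy; rcases Finset.mem_insert.mp hy with rfl | hy
        · exact hxJ.1
        · exact hsub hy
      · rw [hJ, Finset.card_insert_of_notMem hxJ.2, hI]
    exact hJC (heq ▸ hall x hxJ.1 hxJ.2)
  | succ k ih =>
    intro I J hk hI hJ hJC hall
    obtain ⟨z, hz⟩ : ∃ z, z ∈ I \ J := Finset.card_pos.mp (by omega)
    rw [Finset.mem_sdiff] at hz
    obtain ⟨x, hx⟩ : ∃ x, x ∈ J \ I := Finset.card_pos.mp (by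
      have := Finset.le_card_sdiff I J; omega)
    rw [Finset.mem_sdiff] at hx
    have hxz : x ≠ z := fun h => hx.2 (h ▸ hz.1)
    set I' : Finset ℕ := insert x (I.erase z) with hI'def
    have hxnotin : x ∉ I.erase z := fun h => hx.2 (Finset.mem_of_mem_erase h)
    have hI'card : I'.card = ℓ := by
      have hℓpos : 1 ≤ I.card := Finset.card_pos.mpr ⟨z, hz.1⟩
      rw [hI'def, Finset.card_insert_of_notMem hxnotin,
        Finset.card_erase_of_mem hz.1, hI]
      rw [hI] at hℓpos
      omega
    have hI'sdiff : I' \ J = (I \ J).erase z := by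
      ext y
      simp only [Finset.mem_sdiff, Finset.mem_erase, hI'def, Finset.mem_insert]
      constructor
      · rintro ⟨rfl | ⟨hy1, hy2⟩, hyJ⟩
        · exact absurd hx.1 hyJ
        · exact ⟨hy1, hy2, hyJ⟩
      · rintro ⟨hy1, hy2, hy3⟩
        exact ⟨Or.inr ⟨hy1, hy2⟩, hy3⟩
    have hall' : ∀ w ∈ J, w ∉ I' → insert w I' ∈ 𝒞 := by
      intro w hwJ hwI'
      rw [hI'def, Finset.mem_insert] at hwI'
      push_neg at hwI'
      obtain ⟨hwx, hwe⟩ := hwI'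
      have hwz : w ≠ z := fun h => hz.2 (h ▸ hwJ)
      have hwI : w ∉ I := fun h => hwe (Finset.mem_erase.mpr ⟨hwz, h⟩)
      have hC₁ : insert x I ∈ 𝒞 := hall x hx.1 hx.2
      have hC₂ : insert w I ∈ 𝒞 := hall w hwJ hwI
      have hunion : insert x I ∪ insert w I = insert x (insert w I) := by
        ext y; simp only [Finset.mem_union, Finset.mem_insert]; tauto
      have hwnotin : w ∉ insert x I := by
        simp only [Finset.mem_insert]; push_neg; exact ⟨hwx, hwI⟩
      have hucard : (insert x I ∪ insert w I).card = ℓ + 2 := by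
        rw [hunion, Finset.insert_comm, Finset.card_insert_of_notMem hwnotin,
          Finset.card_insert_of_notMem hx.2, hI]
      have hsub3 : insert w I' ⊆ insert x I ∪ insert w I := by
        rw [hunion, hI'def]
        intro y hy
        simp only [Finset.mem_insert, Finset.mem_erase] at hy ⊢
        rcases hy with rfl | rfl | ⟨_, hyI⟩
        · exact Or.inr (Or.inl rfl)
        · exact Or.inl rfl
        · exact Or.inr (Or.inr hyI)
      have hcard3 : (insert w I').card = ℓ + 1 := by
        rw [Finset.card_insert_of_notMem (by
          rw [hI'def, Finset.mem_insert]; push_neg; exact ⟨hwx, hwe⟩), hI'card]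
      exact hcond _ hC₁ _ hC₂ hucard _ hsub3 hcard3
    exact ih I' J (by
      rw [hI'sdiff, Finset.card_erase_of_mem (Finset.mem_sdiff.mpr hz), hk]; omega) hI'card hJ hJC hall'

/-- The independence predicate for the unique rank-`(ℓ+1)` matroid. -/
def MyIndep (ℓ n : ℕ) (𝒞 : Set (Finset ℕ)) (I : Set ℕ) : Prop :=
  ∃ S : Finset ℕ, I = ↑S ∧ S ⊆ Finset.Icc 1 n ∧
    (S.card ≤ ℓ ∨ (S.card = ℓ + 1 ∧ S ∉ 𝒞))

lemma myIndep_coe (ℓ n : ℕ) (𝒞 : Set (Finset ℕ)) (S : Finset ℕ) :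
    MyIndep ℓ n 𝒞 ↑S ↔ S ⊆ Finset.Icc 1 n ∧ (S.card ≤ ℓ ∨ (S.card = ℓ + 1 ∧ S ∉ 𝒞)) := by
  constructor
  · rintro ⟨T, hT, h2, h3⟩
    obtain rfl : T = S := Finset.coe_injective hT.symm
    exact ⟨h2, h3⟩
  · rintro ⟨h2, h3⟩
    exact ⟨S, rfl, h2, h3⟩

/-- The unique `ℓ`-generic matroid of rank `ℓ+1` with small circuits `𝒞`. -/
noncomputable def MyMatroid (ℓ n : ℕ) (𝒞 : Set (Finset ℕ)) (hcond : CondC ℓ 𝒞) : Matroid ℕ :=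
  (IndepMatroid.ofFinite (E := ↑(Finset.Icc 1 n)) (Finset.Icc 1 n).finite_toSet
    (MyIndep ℓ n 𝒞)
    ⟨∅, by simp, by simp, Or.inl (by simp)⟩
    (by
      rintro I J ⟨T, rfl, hTsub, hTcard⟩ hIJ
      have hIfin : I.Finite := T.finite_toSet.subset hIJ
      have hsub : hIfin.toFinset ⊆ T := by
        intro x hx
        rw [Set.Finite.mem_toFinset] at hx
        exact hIJ hx
      refine ⟨hIfin.toFinset, hIfin.coe_toFinset.symm, hsub.trans hTsub, ?_⟩
      have hle := Finset.card_le_card hsub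
      rcases hTcard with h | ⟨h1, h2⟩
      · exact Or.inl (le_trans hle h)
      · rcases lt_or_eq_of_le hle with hlt | heq
        · exact Or.inl (by omega)
        · refine Or.inr ⟨by omega, ?_⟩
          have hTeq : hIfin.toFinset = T := Finset.eq_of_subset_of_card_le hsub (by omega)
          rwa [hTeq])
    (by
      rintro I J ⟨S, rfl, hSsub, hScard⟩ ⟨T, rfl, hTsub, hTcard⟩ hlt
      rw [Set.ncard_coe_finset, Set.ncard_coe_finset] at hlt
      by_cases hsmall : S.card < ℓ
      · obtain ⟨e, he⟩ : ∃ e, e ∈ T \ S := Finset.card_pos.mp (by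
          have := Finset.le_card_sdiff S T; omega)
        rw [Finset.mem_sdiff] at he
        refine ⟨e, he.1, he.2, insert e S, by simp, ?_, Or.inl ?_⟩
        · exact Finset.insert_subset (hTsub he.1) hSsub
        · rw [Finset.card_insert_of_notMem he.2]; omega
      · have hSc : S.card = ℓ := by
          rcases hScard with h | ⟨h1, _⟩
          · omega
          · exfalso; rcases hTcard with h' | ⟨h', _⟩ <;> omega
        have hTc : T.card = ℓ + 1 ∧ T ∉ 𝒞 := by
          rcases hTcard with h | h
          · exfalso; omega
          · exact h
        by_contra hcon
        push_neg at hcon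
        refine exchange_key ℓ 𝒞 hcond (S \ T).card S T rfl hSc hTc.1 hTc.2 ?_
        intro x hxT hxS
        by_contra hxC
        exact hcon x hxT hxS ⟨insert x S, by simp, Finset.insert_subset (hTsub hxT) hSsub,
          Or.inr ⟨by rw [Finset.card_insert_of_notMem hxS]; omega, hxC⟩⟩)
    (by
      rintro I ⟨S, rfl, hsub, _⟩
      exact Finset.coe_subset.mpr hsub)).matroid

lemma myMatroid_E (ℓ n : ℕ) (𝒞 : Set (Finset ℕ)) (hcond : CondC ℓ 𝒞) :
    (MyMatroid ℓ n 𝒞 hcond).E = ↑(Finset.Icc 1 n) := rfl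

lemma myMatroid_indep (ℓ n : ℕ) (𝒞 : Set (Finset ℕ)) (hcond : CondC ℓ 𝒞) (I : Set ℕ) :
    (MyMatroid ℓ n 𝒞 hcond).Indep I ↔ MyIndep ℓ n 𝒞 I := Iff.rfl

lemma indep_card_le_of_rank (ℓ : ℕ) (M : Matroid ℕ) (hrk : HasRank M (ℓ + 1))
    (S : Finset ℕ) (hind : M.Indep ↑S) : S.card ≤ ℓ + 1 := by
  obtain ⟨B, hB, hBcard⟩ := hrk
  obtain ⟨B', hB', hsub⟩ := hind.exists_isBase_superset
  have h1 : (↑S : Set ℕ).encard ≤ B'.encard := Set.encard_mono hsub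
  rw [hB'.encard_eq_encard_of_isBase hB, Set.encard_coe_eq_coe_finsetCard,
    Set.encard_coe_eq_coe_finsetCard] at h1
  have h2 : S.card ≤ B.card := by exact_mod_cast h1
  omega

lemma indep_small (ℓ n : ℕ) (M : Matroid ℕ) (hE : M.E = ↑(Finset.Icc 1 n))
    (hgen : GenericM ℓ M) (S : Finset ℕ) (hsub : S ⊆ Finset.Icc 1 n)
    (hcard : S.card ≤ ℓ) : M.Indep ↑S := by
  by_contra h
  obtain ⟨C, hCS, hC⟩ := exists_circuitF M S
    (by rw [hE]; exact Finset.coe_subset.mpr hsub) h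
  have h1 := hgen C hC
  have h2 := Finset.card_le_card hCS
  omega

lemma generic_indep_char (ℓ n : ℕ) (𝒞 : Set (Finset ℕ)) (M : Matroid ℕ)
    (hE : M.E = ↑(Finset.Icc 1 n)) (hgen : GenericM ℓ M)
    (hcirc : ∀ C : Finset ℕ, (IsCircuitF M C ∧ C.card = ℓ + 1) ↔ C ∈ 𝒞)
    (hrk : HasRank M (ℓ + 1)) (S : Finset ℕ) (hsub : S ⊆ Finset.Icc 1 n) :
    M.Indep ↑S ↔ (S.card ≤ ℓ ∨ (S.card = ℓ + 1 ∧ S ∉ 𝒞)) := by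
  constructor
  · intro h
    have hle := indep_card_le_of_rank ℓ M hrk S h
    rcases Nat.lt_or_ge S.card (ℓ + 1) with hlt | hge
    · exact Or.inl (by omega)
    · have hcard : S.card = ℓ + 1 := by omega
      refine Or.inr ⟨hcard, fun hS𝒞 => ?_⟩
      exact ((hcirc S).mpr hS𝒞).1.2.1 h
  · rintro (h | ⟨h1, h2⟩)
    · exact indep_small ℓ n M hE hgen S hsub h
    · by_contra hdep
      obtain ⟨C, hCS, hC⟩ := exists_circuitF M S
        (by rw [hE]; exact Finset.coe_subset.mpr hsub) hdep
      have hgt := hgen C hC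
      have hle := Finset.card_le_card hCS
      have hCeq : C = S := Finset.eq_of_subset_of_card_le hCS (by omega)
      exact h2 ((hcirc S).mp ⟨hCeq ▸ hC, h1⟩)

lemma myMatroid_generic (ℓ n : ℕ) (𝒞 : Set (Finset ℕ)) (hcond : CondC ℓ 𝒞) :
    GenericM ℓ (MyMatroid ℓ n 𝒞 hcond) := by
  intro C hC
  obtain ⟨hCE, hdep, _⟩ := hC
  by_contra hle
  push_neg at hle
  exact hdep ((myIndep_coe ℓ n 𝒞 C).mpr
    ⟨Finset.coe_subset.mp hCE, Or.inl hle⟩)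

lemma myMatroid_circuits (ℓ n : ℕ) (𝒞 : Set (Finset ℕ)) (hcond : CondC ℓ 𝒞)
    (h𝒞 : ∀ C ∈ 𝒞, C ⊆ Finset.Icc 1 n ∧ C.card = ℓ + 1) (C : Finset ℕ) :
    (IsCircuitF (MyMatroid ℓ n 𝒞 hcond) C ∧ C.card = ℓ + 1) ↔ C ∈ 𝒞 := by
  constructor
  · rintro ⟨⟨hCE, hdep, _⟩, hcard⟩
    by_contra h
    exact hdep ((myIndep_coe ℓ n 𝒞 C).mpr
      ⟨Finset.coe_subset.mp hCE, Or.inr ⟨hcard, h⟩⟩)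
  · intro hC
    obtain ⟨hsub, hcard⟩ := h𝒞 C hC
    refine ⟨⟨Finset.coe_subset.mpr hsub, ?_, ?_⟩, hcard⟩
    · intro hind
      rcases ((myIndep_coe ℓ n 𝒞 C).mp hind).2 with h | ⟨_, h⟩
      · omega
      · exact h hC
    · intro x hx
      refine (myIndep_coe ℓ n 𝒞 (C.erase x)).mpr
        ⟨(Finset.erase_subset x C).trans hsub, Or.inl ?_⟩
      rw [Finset.card_erase_of_mem hx, hcard]
      omega

lemma myMatroid_hasRank (ℓ n : ℕ) (𝒞 : Set (Finset ℕ)) (hcond : CondC ℓ 𝒞)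
    (h𝒞 : ∀ C ∈ 𝒞, C ⊆ Finset.Icc 1 n ∧ C.card = ℓ + 1)
    (hne : 𝒞 ≠ {C : Finset ℕ | C ⊆ Finset.Icc 1 n ∧ C.card = ℓ + 1}) :
    HasRank (MyMatroid ℓ n 𝒞 hcond) (ℓ + 1) := by
  have hex : ∃ B : Finset ℕ, (B ⊆ Finset.Icc 1 n ∧ B.card = ℓ + 1) ∧ B ∉ 𝒞 := by
    by_contra h
    push_neg at h
    apply hne
    apply Set.Subset.antisymm
    · intro C hC; exact h𝒞 C hC
    · intro C hC; exact h C ⟨hC.1, hC.2⟩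
  obtain ⟨B, ⟨hBsub, hBcard⟩, hB𝒞⟩ := hex
  refine ⟨B, ?_, hBcard⟩
  have hind : (MyMatroid ℓ n 𝒞 hcond).Indep ↑B :=
    (myIndep_coe ℓ n 𝒞 B).mpr ⟨hBsub, Or.inr ⟨hBcard, hB𝒞⟩⟩
  apply Matroid.Indep.isBase_of_maximal hind
  intro J hJ hBJ
  obtain ⟨T, rfl, hTsub, hTcard⟩ := (myMatroid_indep ℓ n 𝒞 hcond J).mp hJ
  have hBT : B ⊆ T := Finset.coe_subset.mp hBJ
  have hTle : T.card ≤ ℓ + 1 := by rcases hTcard with h | ⟨h, _⟩ <;> omega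
  have hBeq : B = T := Finset.eq_of_subset_of_card_le hBT (by omega)
  rw [hBeq]

theorem rank_and_uniqueness_of_generic_matroid
    (ℓ n : ℕ) (hℓ : 1 ≤ ℓ) (hn : ℓ + 1 ≤ n) (𝒞 : Set (Finset ℕ))
    (h𝒞 : ∀ C ∈ 𝒞, C ⊆ Finset.Icc 1 n ∧ C.card = ℓ + 1)
    (hcond : CondC ℓ 𝒞)
    (hne : 𝒞 ≠ {C : Finset ℕ | C ⊆ Finset.Icc 1 n ∧ C.card = ℓ + 1}) :
    (∀ M : Matroid ℕ, M.E = ↑(Finset.Icc 1 n) → GenericM ℓ M →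
      (∀ C : Finset ℕ, (IsCircuitF M C ∧ C.card = ℓ + 1) ↔ C ∈ 𝒞) →
      ∀ B : Finset ℕ, M.IsBase ↑B → ℓ < B.card) ∧
    (∃! M : Matroid ℕ, M.E = ↑(Finset.Icc 1 n) ∧ GenericM ℓ M ∧
      (∀ C : Finset ℕ, (IsCircuitF M C ∧ C.card = ℓ + 1) ↔ C ∈ 𝒞) ∧
      HasRank M (ℓ + 1)) := by
  constructor
  · intro M hE hgen hcirc B hB
    by_contra hle
    push_neg at hle
    apply hne
    refine Set.Subset.antisymm (fun C hC => h𝒞 C hC) ?_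
    intro S hS
    simp only [Set.mem_setOf_eq] at hS
    have hdep : ¬ M.Indep ↑S := by
      intro hind
      obtain ⟨B', hB', hsub⟩ := hind.exists_isBase_superset
      have h1 : (↑S : Set ℕ).encard ≤ B'.encard := Set.encard_mono hsub
      rw [hB'.encard_eq_encard_of_isBase hB, Set.encard_coe_eq_coe_finsetCard,
        Set.encard_coe_eq_coe_finsetCard] at h1
      have h2 : S.card ≤ B.card := by exact_mod_cast h1
      omega
    obtain ⟨C, hCS, hC⟩ := exists_circuitF M S
      (by rw [hE]; exact Finset.coe_subset.mpr hS.1) hdep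
    have hgt := hgen C hC
    have hle2 := Finset.card_le_card hCS
    have hCeq : C = S := Finset.eq_of_subset_of_card_le hCS (by omega)
    exact (hcirc S).mp ⟨hCeq ▸ hC, hS.2⟩
  · refine ⟨MyMatroid ℓ n 𝒞 hcond,
      ⟨rfl, myMatroid_generic ℓ n 𝒞 hcond, myMatroid_circuits ℓ n 𝒞 hcond h𝒞,
        myMatroid_hasRank ℓ n 𝒞 hcond h𝒞 hne⟩, ?_⟩
    rintro M ⟨hE, hgen, hcirc, hrk⟩
    refine Matroid.ext_indep (by rw [hE, myMatroid_E]) ?_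
    intro I hI
    rw [hE] at hI
    have hIfin : I.Finite := (Finset.Icc 1 n).finite_toSet.subset hI
    have hIcoe : I = ↑hIfin.toFinset := hIfin.coe_toFinset.symm
    have hsub : hIfin.toFinset ⊆ Finset.Icc 1 n := by
      intro x hx; rw [Set.Finite.mem_toFinset] at hx; exact hI hx
    rw [hIcoe, generic_indep_char ℓ n 𝒞 M hE hgen hcirc hrk _ hsub,
      myMatroid_indep, myIndep_coe]
    tauto
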